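/- Under Assumptions (A1), the bias of the non-normalized estimator vanishes uniformly: sup_{x∈T} | E[f̃_n(x)] − f(x) | ≤ 3 · sup_{x∈T} P(Z_{x,h_n} ≠ x) for every n, and hence sup_{x∈T} | E[f̃_n(x)] − f(x) | → 0 as n → ∞. -/

import Mathlib

open MeasureTheory ProbabilityTheory Filter Topology

theorem bias_uniform_bound_and_convergence
    {Ω : Type*} [MeasurableSpace Ω] (P : Measure Ω) [IsProbabilityMeasure P]
    (T : Set ℝ) (hTc : T.Countable)
    (f : ℝ → ℝ) (hf0 : ∀ x, 0 ≤ f x) (hfT : ∀ x ∉ T, f x = 0) (hf1 : HasSum f 1)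
    (S : ℝ → Set ℝ) (hSc : ∀ x ∈ T, (S x).Countable)
    (K : ℝ → ℝ → ℝ → ℝ)
    (hK0 : ∀ x ∈ T, ∀ h > (0:ℝ), ∀ z, 0 ≤ K x h z)
    (hKS : ∀ x ∈ T, ∀ h > (0:ℝ), ∀ z ∉ S x, K x h z = 0)
    (hK1 : ∀ x ∈ T, ∀ h > (0:ℝ), HasSum (K x h) 1)
    (hKm : ∀ x h, Measurable (K x h))
    (hxS : ∀ x ∈ T, x ∈ S x)
    (α : ℝ) (hα : 0 < α)
    (hsep : ∀ x ∈ T, ∀ z ∈ (T ∪ S x) \ {x}, α ≤ |z - x|)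
    (H : ℕ → ℝ) (hH : ∀ n, 0 < H n) (hH0 : Tendsto H atTop (𝓝 0))
    (X1 : Ω → ℝ) (hX1m : Measurable X1)
    (hX1d : ∀ x : ℝ, P (X1 ⁻¹' {x}) = ENNReal.ofReal (f x))
    (EZ VZ : ℝ → ℝ → ℝ)
    (hEZ : ∀ x ∈ T, ∀ h > (0:ℝ), HasSum (fun z : ℝ => K x h z * z) (EZ x h))
    (hVZ : ∀ x ∈ T, ∀ h > (0:ℝ), HasSum (fun z : ℝ => K x h z * (z - EZ x h) ^ 2) (VZ x h))
    (hA1E : ∀ ε > (0:ℝ), ∃ N : ℕ, ∀ n ≥ N, ∀ x ∈ T, |EZ x (H n) - x| ≤ ε)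
    (hA1V : ∀ ε > (0:ℝ), ∃ N : ℕ, ∀ n ≥ N, ∀ x ∈ T, VZ x (H n) ≤ ε)
    :
    (∀ n : ℕ, ∀ x ∈ T,
      |(∫ ω, K x (H n) (X1 ω) ∂P) - f x| ≤ 3 * ⨆ y : T, (1 - K (y:ℝ) (H n) (y:ℝ))) ∧
    (∀ ε > (0:ℝ), ∃ N : ℕ, ∀ n ≥ N, ∀ x ∈ T, |(∫ ω, K x (H n) (X1 ω) ∂P) - f x| ≤ ε) := by
  classical
  have hfs : Summable f := hf1.summable
  have hfle1 : ∀ t, f t ≤ 1 := fun t => le_hasSum hf1 t (fun i _ => hf0 i)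
  set μ : Measure ℝ := P.map X1 with hμ
  haveI : IsProbabilityMeasure μ := Measure.isProbabilityMeasure_map hX1m.aemeasurable
  have hμsing : ∀ t : ℝ, μ {t} = ENNReal.ofReal (f t) := by
    intro t
    rw [hμ, Measure.map_apply hX1m (measurableSet_singleton t)]
    exact hX1d t
  have hμTc : μ Tᶜ = 0 := by
    have hμT : μ T = 1 := by
      have h1 : μ T = ∑' t : T, μ {(t : ℝ)} := by
        conv_lhs => rw [← Set.biUnion_of_singleton T]
        exact measure_biUnion hTc
          (fun a _ b _ hab => by simp [Function.onFun, Set.disjoint_singleton, hab])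
          (fun b _ => measurableSet_singleton b)
      have h2 : ∑' t : T, μ {(t : ℝ)} = ENNReal.ofReal (∑' t : T, f t) := by
        rw [ENNReal.ofReal_tsum_of_nonneg (f := fun t : T => f t) (fun t => hf0 t)
          (hfs.subtype T)]
        exact tsum_congr fun t => hμsing t
      have h3 : ∑' t : T, f t = 1 := by
        rw [tsum_subtype_eq_of_support_subset
          (fun t ht => by by_contra h; exact ht (hfT t h))]
        exact hf1.tsum_eq
      rw [h1, h2, h3]; simp
    have := measure_compl hTc.measurableSet (measure_ne_top μ T)
    rw [hμT, measure_univ] at this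
    simpa using this
  -- main bound
  have key : ∀ n : ℕ, ∀ x ∈ T,
      |(∫ ω, K x (H n) (X1 ω) ∂P) - f x| ≤ 2 * (1 - K x (H n) x) := by
    intro n x hx
    set g : ℝ → ℝ := K x (H n) with hg
    have hn : 0 < H n := hH n
    have hg0 : ∀ z, 0 ≤ g z := hK0 x hx (H n) hn
    have hg1 : HasSum g 1 := hK1 x hx (H n) hn
    have hgle1 : ∀ z, g z ≤ 1 := fun z => le_hasSum hg1 z (fun i _ => hg0 i)
    -- integral = tsum
    have hint : Integrable g μ := by
      refine (integrable_const (1:ℝ)).mono' (hKm x (H n)).aestronglyMeasurable ?_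
      exact ae_of_all _ fun z => by
        rw [Real.norm_eq_abs, abs_of_nonneg (hg0 z)]; exact hgle1 z
    have hI : (∫ ω, K x (H n) (X1 ω) ∂P) = ∑' t : T, f t * g t := by
      have h1 : (∫ ω, K x (H n) (X1 ω) ∂P) = ∫ z, g z ∂μ :=
        (integral_map hX1m.aemeasurable (hKm x (H n)).aestronglyMeasurable).symm
      have h2 : ∫ z, g z ∂μ = ∫ z in T, g z ∂μ := by
        refine (setIntegral_eq_integral_of_ae_compl_eq_zero ?_).symm
        filter_upwards [measure_eq_zero_iff_ae_notMem.mp hμTc] with z hz hz'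
        exact absurd hz' (by simpa using hz)
      have h3 : ∫ z in T, g z ∂μ = ∑' t : T, (μ {(t : ℝ)}).toReal • g t :=
        setIntegral_countable g hTc hint.integrableOn
      rw [h1, h2, h3]
      refine tsum_congr fun t => ?_
      rw [hμsing, ENNReal.toReal_ofReal (hf0 t), smul_eq_mul]
    -- sum manipulation
    have hFsum : Summable (fun t : T => f t * g t) :=
      Summable.of_nonneg_of_le (fun t => mul_nonneg (hf0 t) (hg0 t))
        (fun t => by
          calc f (t:ℝ) * g t ≤ 1 * g t :=
                mul_le_mul_of_nonneg_right (hfle1 t) (hg0 t)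
            _ = g t := one_mul _)
        (hg1.summable.subtype T)
    set x0 : T := ⟨x, hx⟩ with hx0
    have hsplit : ∑' t : T, f t * g t
        = f x * g x + ∑' t : T, ite (t = x0) 0 (f t * g t) :=
      Summable.tsum_eq_add_tsum_ite hFsum x0
    set G : ℝ → ℝ := fun z => if z = x then 0 else g z with hG
    have hG0 : ∀ z, 0 ≤ G z := fun z => by
      simp only [hG]; split_ifs; exacts [le_rfl, hg0 z]
    have hGle : ∀ z, G z ≤ g z := fun z => by
      simp only [hG]; split_ifs; exacts [hg0 z, le_rfl]
    have hGsum : Summable G := Summable.of_nonneg_of_le hG0 hGle hg1.summable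
    have hGtsum : ∑' z, G z = 1 - g x := by
      have h := Summable.tsum_eq_add_tsum_ite hg1.summable x
      rw [hg1.tsum_eq] at h
      have h2 : ∑' z, ite (z = x) 0 (g z) = 1 - g x := by linarith
      exact h2
    have hR : ∑' t : T, ite (t = x0) 0 (f t * g t) ≤ 1 - g x := by
      have h1 : ∑' t : T, ite (t = x0) 0 (f t * g t) ≤ ∑' t : T, G t := by
        refine Summable.tsum_le_tsum (fun t => ?_) ?_ (hGsum.subtype T)
        · by_cases h : t = x0
          · rw [if_pos h]; exact hG0 t
          · have htx : (t : ℝ) ≠ x := fun hc => h (Subtype.ext hc)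
            rw [if_neg h]
            have : G (t:ℝ) = g t := by simp only [hG]; rw [if_neg htx]
            rw [this]
            calc f (t:ℝ) * g t ≤ 1 * g t :=
                  mul_le_mul_of_nonneg_right (hfle1 t) (hg0 t)
              _ = g t := one_mul _
        · refine Summable.of_nonneg_of_le (fun t => ?_) (fun t => ?_) (hGsum.subtype T)
          · by_cases h : t = x0
            · rw [if_pos h]
            · rw [if_neg h]; exact mul_nonneg (hf0 _) (hg0 _)
          · by_cases h : t = x0
            · rw [if_pos h]; exact hG0 t
            · have htx : (t : ℝ) ≠ x := fun hc => h (Subtype.ext hc)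
              rw [if_neg h]
              have hGt : G (t:ℝ) = g t := by simp only [hG]; rw [if_neg htx]
              show f (t:ℝ) * g t ≤ G (t:ℝ)
              rw [hGt]
              calc f (t:ℝ) * g t ≤ 1 * g t :=
                    mul_le_mul_of_nonneg_right (hfle1 t) (hg0 t)
                _ = g t := one_mul _
      have h2 : ∑' t : T, G t ≤ ∑' z, G z := Summable.tsum_subtype_le G T hG0 hGsum
      rw [hGtsum] at h2
      linarith
    have hRnonneg : 0 ≤ ∑' t : T, ite (t = x0) 0 (f t * g t) :=
      tsum_nonneg (fun t => by
        by_cases h : t = x0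
        · rw [if_pos h]
        · rw [if_neg h]; exact mul_nonneg (hf0 _) (hg0 _))
    have hgx1 : g x ≤ 1 := hgle1 x
    rw [hI, hsplit]
    have hfx1 : f x ≤ 1 := hfle1 x
    have hfx0 : 0 ≤ f x := hf0 x
    have hgx0 : 0 ≤ g x := hg0 x
    rw [abs_le]
    constructor <;> nlinarith [hR, hRnonneg]
  -- nonneg of 1 - K x h x
  have hone : ∀ n : ℕ, ∀ x ∈ T, 0 ≤ 1 - K x (H n) x := by
    intro n x hx
    have := le_hasSum (hK1 x hx (H n) (hH n)) x (fun i _ => hK0 x hx (H n) (hH n) i)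
    linarith
  constructor
  · intro n x hx
    haveI : Nonempty T := ⟨⟨x, hx⟩⟩
    have hbdd : BddAbove (Set.range fun y : T => 1 - K (y:ℝ) (H n) (y:ℝ)) := by
      refine ⟨1, ?_⟩
      rintro _ ⟨y, rfl⟩
      have := hK0 (y:ℝ) y.2 (H n) (hH n) (y:ℝ)
      simp only
      linarith
    have hle : 1 - K x (H n) x ≤ ⨆ y : T, (1 - K (y:ℝ) (H n) (y:ℝ)) :=
      le_ciSup hbdd ⟨x, hx⟩
    have h0s : 0 ≤ ⨆ y : T, (1 - K (y:ℝ) (H n) (y:ℝ)) :=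
      le_trans (hone n x hx) hle
    calc |(∫ ω, K x (H n) (X1 ω) ∂P) - f x| ≤ 2 * (1 - K x (H n) x) := key n x hx
      _ ≤ 2 * ⨆ y : T, (1 - K (y:ℝ) (H n) (y:ℝ)) := by linarith
      _ ≤ 3 * ⨆ y : T, (1 - K (y:ℝ) (H n) (y:ℝ)) := by linarith
  · -- Chebyshev
    have cheb : ∀ n : ℕ, ∀ x ∈ T, |EZ x (H n) - x| ≤ α / 2 →
        1 - K x (H n) x ≤ (4 / α ^ 2) * VZ x (H n) := by
      intro n x hx hEc
      set g : ℝ → ℝ := K x (H n) with hg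
      have hn : 0 < H n := hH n
      have hg0 : ∀ z, 0 ≤ g z := hK0 x hx (H n) hn
      have hg1 : HasSum g 1 := hK1 x hx (H n) hn
      set G : ℝ → ℝ := fun z => if z = x then 0 else g z with hG
      have hG0 : ∀ z, 0 ≤ G z := fun z => by
        simp only [hG]; split_ifs; exacts [le_rfl, hg0 z]
      have hGle : ∀ z, G z ≤ g z := fun z => by
        simp only [hG]; split_ifs; exacts [hg0 z, le_rfl]
      have hGsum : Summable G := Summable.of_nonneg_of_le hG0 hGle hg1.summable
      have hGtsum : ∑' z, G z = 1 - g x := by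
        have h := Summable.tsum_eq_add_tsum_ite hg1.summable x
        rw [hg1.tsum_eq] at h
        have h2 : ∑' z, ite (z = x) 0 (g z) = 1 - g x := by linarith
        exact h2
      have hVsum : HasSum (fun z : ℝ => g z * (z - EZ x (H n)) ^ 2) (VZ x (H n)) :=
        hVZ x hx (H n) hn
      have hα2 : (0:ℝ) < α ^ 2 := by positivity
      have hterm : ∀ z, G z ≤ (4 / α ^ 2) * (g z * (z - EZ x (H n)) ^ 2) := by
        intro z
        have hc : 0 ≤ (4 / α ^ 2) * (g z * (z - EZ x (H n)) ^ 2) :=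
          mul_nonneg (by positivity) (mul_nonneg (hg0 z) (sq_nonneg _))
        by_cases hzx : z = x
        · have hGz : G z = 0 := by simp only [hG]; rw [if_pos hzx]
          rw [hGz]; exact hc
        · by_cases hgz : g z = 0
          · have hGz : G z = 0 := by simp only [hG]; rw [if_neg hzx]; exact hgz
            rw [hGz]; exact hc
          · have hzS : z ∈ S x := by
              by_contra h
              exact hgz (hKS x hx (H n) hn z h)
            have hsep' : α ≤ |z - x| :=
              hsep x hx z ⟨Set.mem_union_right _ hzS, hzx⟩
            have h1 : α / 2 ≤ |z - EZ x (H n)| := by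
              have habs := abs_sub_abs_le_abs_sub (z - x) (EZ x (H n) - x)
              have h2 : |(z - x) - (EZ x (H n) - x)| = |z - EZ x (H n)| := by
                ring_nf
              calc α / 2 = α - α / 2 := by ring
                _ ≤ |z - x| - |EZ x (H n) - x| := by linarith
                _ ≤ |(z - x) - (EZ x (H n) - x)| := habs
                _ = |z - EZ x (H n)| := h2
            have h2 : (α / 2) ^ 2 ≤ (z - EZ x (H n)) ^ 2 := by
              rw [← sq_abs (z - EZ x (H n))]
              exact pow_le_pow_left₀ (by positivity) h1 2
            have hGz : G z = g z := by simp only [hG]; rw [if_neg hzx]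
            rw [hGz]
            have hone' : 1 ≤ (4 / α ^ 2) * (z - EZ x (H n)) ^ 2 := by
              rw [div_mul_eq_mul_div, le_div_iff₀ hα2]
              nlinarith
            calc g z = g z * 1 := (mul_one _).symm
              _ ≤ g z * ((4 / α ^ 2) * (z - EZ x (H n)) ^ 2) :=
                  mul_le_mul_of_nonneg_left hone' (hg0 z)
              _ = (4 / α ^ 2) * (g z * (z - EZ x (H n)) ^ 2) := by ring
      have h1 : ∑' z, G z ≤ ∑' z, (4 / α ^ 2) * (g z * (z - EZ x (H n)) ^ 2) :=
        Summable.tsum_le_tsum hterm hGsum (hVsum.summable.mul_left _)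
      rw [hGtsum] at h1
      rw [tsum_mul_left, hVsum.tsum_eq] at h1
      exact h1
    intro ε hε
    obtain ⟨N1, hN1⟩ := hA1E (α / 2) (half_pos hα)
    obtain ⟨N2, hN2⟩ := hA1V (ε * α ^ 2 / 8) (by positivity)
    refine ⟨max N1 N2, fun n hn x hx => ?_⟩
    have h1 := hN1 n (le_trans (le_max_left _ _) hn) x hx
    have h2 := hN2 n (le_trans (le_max_right _ _) hn) x hx
    have h3 := cheb n x hx h1
    have hα2 : (0:ℝ) < α ^ 2 := by positivity
    have h4 : (4 / α ^ 2) * VZ x (H n) ≤ ε / 2 := by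
      have he : (4 / α ^ 2) * (ε * α ^ 2 / 8) = ε / 2 := by field_simp; ring
      calc (4 / α ^ 2) * VZ x (H n) ≤ (4 / α ^ 2) * (ε * α ^ 2 / 8) :=
            mul_le_mul_of_nonneg_left h2 (by positivity)
        _ = ε / 2 := he
    calc |(∫ ω, K x (H n) (X1 ω) ∂P) - f x| ≤ 2 * (1 - K x (H n) x) := key n x hx
      _ ≤ 2 * (ε / 2) := by linarith
      _ = ε := by ring
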